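/- There exists a constant C > 0 such that for every n ≥ 1, every θ = (θ_1,…,θ_n) ∈ ℝⁿ and all a, b ∈ ℝⁿ, ‖(θa, θb)‖_{Z_2^n} ≤ C·(max_{1≤j≤n} |θ_j|)·‖(a,b)‖_{Z_2^n}, where θa and θb denote the coordinatewise products (θ_j a_j)_j and (θ_j b_j)_j. -/

import Mathlib

open scoped BigOperators

/-- The Euclidean norm on `ℝⁿ`. -/
noncomputable def l2 {n : ℕ} (b : Fin n → ℝ) : ℝ := Real.sqrt (∑ j, b j ^ 2)

/-- The Kalton–Peck map `F(b)_j = b_j log(|b_j|/‖b‖₂)`, with `F(b)_j = 0` when `b_j = 0`. -/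
noncomputable def KPF {n : ℕ} (b : Fin n → ℝ) : Fin n → ℝ :=
  fun j => if b j = 0 then 0 else b j * Real.log (|b j| / l2 b)

/-- The Kalton–Peck quasi-norm `‖(a,b)‖ = ‖b‖₂ + ‖a - F(b)‖₂` on `ℝⁿ × ℝⁿ`. -/
noncomputable def znorm {n : ℕ} (x : (Fin n → ℝ) × (Fin n → ℝ)) : ℝ :=
  l2 x.2 + l2 (x.1 - KPF x.2)

/-- Operator "norm" `sup_{x ≠ 0} N_W(T x) / N_V(x)` of a map `T` between spaces
equipped with (quasi-)norms `N_V`, `N_W`. -/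
noncomputable def ratioSup {V W : Type*} [Zero V] (NV : V → ℝ) (NW : W → ℝ) (T : V → W) : ℝ :=
  ⨆ x : {x : V // x ≠ 0}, NW (T x.1) / NV x.1

lemma l2_nonneg {n : ℕ} (b : Fin n → ℝ) : 0 ≤ l2 b := Real.sqrt_nonneg _

lemma l2_sq {n : ℕ} (b : Fin n → ℝ) : (l2 b)^2 = ∑ j, b j ^2 :=
  Real.sq_sqrt (Finset.sum_nonneg fun j _ => sq_nonneg _)

lemma abs_le_l2 {n : ℕ} (b : Fin n → ℝ) (j : Fin n) : |b j| ≤ l2 b := by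
  rw [l2, ← Real.sqrt_sq (abs_nonneg (b j)), sq_abs]
  exact Real.sqrt_le_sqrt (Finset.single_le_sum (fun i _ => sq_nonneg (b i)) (Finset.mem_univ j))

lemma l2_le {n : ℕ} (b : Fin n → ℝ) (r : ℝ) (hr : 0 ≤ r) (h : ∑ j, b j^2 ≤ r^2) : l2 b ≤ r := by
  rw [l2]
  calc Real.sqrt (∑ j, b j ^2) ≤ Real.sqrt (r^2) := Real.sqrt_le_sqrt h
  _ = r := Real.sqrt_sq hr

lemma l2_eq_zero {n : ℕ} {b : Fin n → ℝ} (h : l2 b = 0) (j : Fin n) : b j = 0 := by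
  have h1 : ∑ i, b i ^2 = 0 := by
    have := Real.sqrt_eq_zero'.mp h
    have h2 : (0:ℝ) ≤ ∑ i, b i ^ 2 := Finset.sum_nonneg fun i _ => sq_nonneg _
    linarith
  have := (Finset.sum_eq_zero_iff_of_nonneg (fun i _ => sq_nonneg (b i))).mp h1 j (Finset.mem_univ j)
  exact pow_eq_zero_iff (by norm_num) |>.mp this

lemma l2_eq_norm {n : ℕ} (b : Fin n → ℝ) : l2 b = ‖(WithLp.equiv 2 (Fin n → ℝ)).symm b‖ := by
  rw [EuclideanSpace.norm_eq]
  simp [l2, sq_abs]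

lemma l2_add_le {n : ℕ} (x y : Fin n → ℝ) : l2 (x + y) ≤ l2 x + l2 y := by
  simp only [l2_eq_norm]
  have : (WithLp.equiv 2 (Fin n → ℝ)).symm (x + y) = (WithLp.equiv 2 (Fin n → ℝ)).symm x + (WithLp.equiv 2 (Fin n → ℝ)).symm y := rfl
  rw [this]
  exact norm_add_le _ _

lemma l2_mul_le {n : ℕ} (θ b : Fin n → ℝ) (M : ℝ) (hM : 0 ≤ M) (hθ : ∀ j, |θ j| ≤ M) :
    l2 (θ * b) ≤ M * l2 b := by
  apply l2_le _ _ (mul_nonneg hM (l2_nonneg b))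
  rw [mul_pow, l2_sq, Finset.mul_sum]
  apply Finset.sum_le_sum
  intro j _
  have h1 : (θ j * b j)^2 = θ j ^2 * b j ^2 := by ring
  have h2 : θ j ^2 ≤ M^2 := by
    rw [← sq_abs (θ j)]
    exact pow_le_pow_left₀ (abs_nonneg _) (hθ j) 2
  have : (θ * b) j = θ j * b j := rfl
  rw [this, h1]
  nlinarith [sq_nonneg (b j)]

lemma log_le_div_e {t : ℝ} (ht : 0 < t) : Real.log t ≤ t / Real.exp 1 := by
  have h := Real.log_le_sub_one_of_pos (x := t / Real.exp 1) (by positivity)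
  rw [Real.log_div (ne_of_gt ht) (by positivity), Real.log_exp] at h
  linarith



lemma l2_zero_of {n : ℕ} {b : Fin n → ℝ} (h : ∀ j, b j = 0) : l2 b = 0 := by
  rw [l2, Finset.sum_eq_zero (fun j _ => by rw [h j]; ring), Real.sqrt_zero]

-- key commutator bound
set_option maxHeartbeats 1000000 in
lemma comm_bound {n : ℕ} (θ b : Fin n → ℝ) (M : ℝ) (hM : 0 ≤ M) (hθ : ∀ j, |θ j| ≤ M) :
    l2 (θ * KPF b - KPF (θ * b)) ≤ M * l2 b := by
  set B := l2 b with hB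
  set T := l2 (θ * b) with hT
  have hB0 : 0 ≤ B := l2_nonneg b
  have hT0 : 0 ≤ T := l2_nonneg _
  have hTB : T ≤ M * B := l2_mul_le θ b M hM hθ
  apply l2_le _ _ (mul_nonneg hM hB0)
  rcases eq_or_lt_of_le hT0 with hTz | hTpos
  · -- T = 0 : every coordinate of θ*b is zero
    have hzb : ∀ j, θ j * b j = 0 := fun j => l2_eq_zero hTz.symm j
    have hz : ∀ j ∈ Finset.univ, ((θ * KPF b - KPF (θ * b)) j)^2 = 0 := by
      intro j _
      have h1 : (θ * KPF b - KPF (θ * b)) j = θ j * KPF b j - KPF (θ * b) j := rfl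
      have h2 : KPF (θ * b) j = 0 := by simp [KPF, hzb j]
      have h3 : θ j * KPF b j = 0 := by
        rcases mul_eq_zero.mp (hzb j) with h | h
        · simp [h]
        · simp [KPF, h]
      rw [h1, h2, h3]; ring
    rw [Finset.sum_eq_zero hz]
    positivity
  · -- T > 0
    have hBpos : 0 < B := by
      rcases eq_or_lt_of_le hB0 with hBz | h
      · exfalso
        have hb0 : ∀ j, b j = 0 := fun j => l2_eq_zero hBz.symm j
        have : T = 0 := l2_zero_of (fun j => by
          have : (θ * b) j = θ j * b j := rfl
          rw [this, hb0 j, mul_zero])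
        linarith
      · exact h
    have hMpos : 0 < M := by nlinarith
    set e := Real.exp 1 with he
    have hepos : 0 < e := Real.exp_pos 1
    have he2 : (2:ℝ) ≤ e := by
      have := Real.add_one_le_exp (1:ℝ); linarith
    have hL0 : 0 ≤ Real.log (M * B / T) :=
      Real.log_nonneg (by rw [le_div_iff₀ hTpos]; linarith)
    -- pointwise bound
    have key : ∀ j, ((θ * KPF b - KPF (θ * b)) j)^2 ≤
        (T / (e * B))^2 * (b j)^2 + (Real.log (M * B / T))^2 * ((θ j) * (b j))^2 := by
      intro j
      have hcoord : (θ * KPF b - KPF (θ * b)) j = θ j * KPF b j - KPF (θ * b) j := rfl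
      by_cases hbj : b j = 0
      · have hz : (θ * KPF b - KPF (θ * b)) j = 0 := by
          rw [hcoord]; simp [KPF, hbj, show (θ * b) j = θ j * b j from rfl]
        rw [hz, zero_pow (by norm_num)]; positivity
      by_cases hθj : θ j = 0
      · have hz : (θ * KPF b - KPF (θ * b)) j = 0 := by
          rw [hcoord]; simp [KPF, hθj, show (θ * b) j = θ j * b j from rfl]
        rw [hz, zero_pow (by norm_num)]; positivity
      -- main nonzero case
      have htbj : θ j * b j ≠ 0 := mul_ne_zero hθj hbj
      have habsθ : 0 < |θ j| := abs_pos.mpr hθj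
      have habsb : 0 < |b j| := abs_pos.mpr hbj
      have hval : (θ * KPF b - KPF (θ * b)) j = θ j * b j * (Real.log (T / (|θ j| * B))) := by
        rw [hcoord]
        simp only [KPF, show (θ * b) j = θ j * b j from rfl]
        rw [if_neg hbj, if_neg htbj, abs_mul,
            Real.log_div (ne_of_gt habsb) (ne_of_gt hBpos),
            Real.log_div (ne_of_gt (mul_pos habsθ habsb)) (ne_of_gt hTpos),
            Real.log_div (ne_of_gt hTpos) (ne_of_gt (mul_pos habsθ hBpos)),
            Real.log_mul (ne_of_gt habsθ) (ne_of_gt habsb),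
            Real.log_mul (ne_of_gt habsθ) (ne_of_gt hBpos)]
        ring
      rw [hval]
      by_cases hcase : |θ j| * B ≤ T
      · -- small θ_j : bound by first term
        have hkey : |θ j| * Real.log (T / (|θ j| * B)) ≤ T / (e * B) := by
          have h1 : Real.log (T / (|θ j| * B)) ≤ (T / (|θ j| * B)) / e :=
            log_le_div_e (by positivity)
          calc |θ j| * Real.log (T / (|θ j| * B)) ≤ |θ j| * ((T / (|θ j| * B)) / e) :=
                mul_le_mul_of_nonneg_left h1 (le_of_lt habsθ)
            _ = T / (e * B) := by field_simp
        have hlog0 : 0 ≤ Real.log (T / (|θ j| * B)) :=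
          Real.log_nonneg (by rw [le_div_iff₀ (by positivity)]; linarith)
        have h2 : (θ j * b j * Real.log (T / (|θ j| * B)))^2
            = (|θ j| * Real.log (T / (|θ j| * B)))^2 * (b j)^2 := by
          rw [mul_pow, mul_pow, mul_pow, sq_abs]; ring
        rw [h2]
        have h3 : (|θ j| * Real.log (T / (|θ j| * B)))^2 ≤ (T / (e * B))^2 :=
          pow_le_pow_left₀ (mul_nonneg (le_of_lt habsθ) hlog0) hkey 2
        nlinarith [sq_nonneg (b j), sq_nonneg (Real.log (M * B / T) * (θ j * b j))]
      · -- big θ_j : bound by second term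
        push_neg at hcase
        have hlogneg : Real.log (T / (|θ j| * B)) = -(Real.log (|θ j| * B / T)) := by
          rw [Real.log_div (ne_of_gt hTpos) (by positivity),
              Real.log_div (by positivity) (ne_of_gt hTpos)]
          ring
        have hlb : 0 ≤ Real.log (|θ j| * B / T) :=
          Real.log_nonneg (by rw [le_div_iff₀ hTpos]; linarith)
        have hub : Real.log (|θ j| * B / T) ≤ Real.log (M * B / T) := by
          apply Real.log_le_log (by positivity)
          gcongr
          exact hθ j
        have h2 : (Real.log (|θ j| * B / T))^2 ≤ (Real.log (M * B / T))^2 :=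
          pow_le_pow_left₀ hlb hub 2
        rw [hlogneg]
        have h3 : (θ j * b j * -(Real.log (|θ j| * B / T)))^2
            = (θ j * b j)^2 * (Real.log (|θ j| * B / T))^2 := by ring
        rw [h3]
        nlinarith [sq_nonneg (T / (e * B) * b j), sq_nonneg (θ j * b j)]
    -- sum the pointwise bound
    have hsum2 : ∑ j, (θ j * b j)^2 = T^2 := (l2_sq (θ * b)).symm
    have hsum1 : ∑ j, (b j)^2 = B^2 := (l2_sq b).symm
    calc ∑ j, ((θ * KPF b - KPF (θ * b)) j)^2
        ≤ ∑ j, ((T / (e * B))^2 * (b j)^2 + (Real.log (M * B / T))^2 * ((θ j) * (b j))^2) :=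
          Finset.sum_le_sum (fun j _ => key j)
      _ = (T / (e * B))^2 * B^2 + (Real.log (M * B / T))^2 * T^2 := by
          rw [Finset.sum_add_distrib, ← Finset.mul_sum, ← Finset.mul_sum, hsum1, hsum2]
      _ ≤ (M * B)^2 := by
          have hA : (T / (e * B))^2 * B^2 = (T / e)^2 := by field_simp
          have hTlog : T * Real.log (M * B / T) ≤ M * B / e := by
            calc T * Real.log (M * B / T) ≤ T * ((M * B / T) / e) :=
                  mul_le_mul_of_nonneg_left (log_le_div_e (by positivity)) hT0
              _ = M * B / e := by field_simp
          have hB2 : (Real.log (M * B / T))^2 * T^2 = (T * Real.log (M * B / T))^2 := by ring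
          rw [hA, hB2]
          have h1 : (T / e)^2 ≤ (M * B / e)^2 :=
            pow_le_pow_left₀ (by positivity) (by gcongr) 2
          have h2 : (T * Real.log (M * B / T))^2 ≤ (M * B / e)^2 :=
            pow_le_pow_left₀ (mul_nonneg hT0 hL0) hTlog 2
          have he4 : (4:ℝ) ≤ e^2 := by nlinarith
          have h3 : 2 * (M * B / e)^2 ≤ (M * B)^2 := by
            rw [div_pow, ← mul_div_assoc, div_le_iff₀ (by positivity : (0:ℝ) < e^2)]
            nlinarith [sq_nonneg (M * B)]
          linarith


/-- Coordinatewise multiplication by `θ` on both components is bounded on `Z_2^n`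
by `C · max_j |θ_j|`, uniformly in `n`. -/
theorem znorm_coordinatewise_mult :
    ∃ C : ℝ, 0 < C ∧ ∀ n : ℕ, 1 ≤ n → ∀ θ a b : Fin n → ℝ,
      znorm (θ * a, θ * b) ≤ C * (⨆ j, |θ j|) * znorm (a, b) := by
  refine ⟨2, by norm_num, ?_⟩
  intro n hn θ a b
  haveI : Nonempty (Fin n) := Fin.pos_iff_nonempty.mp hn
  set M := ⨆ j, |θ j| with hM
  have hbdd : BddAbove (Set.range fun j => |θ j|) := Set.Finite.bddAbove (Set.finite_range _)
  have hθ : ∀ j, |θ j| ≤ M := fun j => le_ciSup hbdd j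
  have hM0 : 0 ≤ M := le_trans (abs_nonneg _) (hθ (Classical.arbitrary _))
  simp only [znorm]
  have h1 : l2 (θ * b) ≤ M * l2 b := l2_mul_le θ b M hM0 hθ
  have hdecomp : (θ * a) - KPF (θ * b) = (θ * (a - KPF b)) + (θ * KPF b - KPF (θ * b)) := by
    funext j
    simp only [Pi.sub_apply, Pi.mul_apply, Pi.add_apply]
    ring
  have h2 : l2 ((θ * a) - KPF (θ * b)) ≤ M * l2 (a - KPF b) + M * l2 b := by
    rw [hdecomp]
    calc l2 ((θ * (a - KPF b)) + (θ * KPF b - KPF (θ * b)))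
        ≤ l2 (θ * (a - KPF b)) + l2 (θ * KPF b - KPF (θ * b)) := l2_add_le _ _
      _ ≤ M * l2 (a - KPF b) + M * l2 b :=
          add_le_add (l2_mul_le _ _ M hM0 hθ) (comm_bound θ b M hM0 hθ)
  have h3 := l2_nonneg (a - KPF b)
  have h4 := l2_nonneg b
  nlinarith
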